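/- The series ∑_{k≥1} 1/(k!·(k+2)) converges to 1/2. -/

import Mathlib

lemma partial_sum_eq (n : ℕ) :
    ∑ k ∈ Finset.range n, (1 : ℝ) / (Nat.factorial (k + 1) * (k + 3)) =
      1 / 2 - 1 / Nat.factorial (n + 2) := by
  induction n with
  | zero => norm_num [Nat.factorial]
  | succ n ih =>
      rw [Finset.sum_range_succ, ih]
      have h1 : (Nat.factorial (n + 1) : ℝ) ≠ 0 := by positivity
      have h2 : ((n : ℝ) + 3) ≠ 0 := by positivity
      have h3 : (Nat.factorial (n + 3) : ℝ) = Nat.factorial (n + 1) * (n + 2) * (n + 3) := by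
        rw [show n + 3 = n + 2 + 1 from rfl, Nat.factorial_succ,
          show n + 2 = n + 1 + 1 from rfl, Nat.factorial_succ]
        push_cast; ring
      have h4 : (Nat.factorial (n + 2) : ℝ) = Nat.factorial (n + 1) * (n + 2) := by
        rw [show n + 2 = n + 1 + 1 from rfl, Nat.factorial_succ]; push_cast; ring
      rw [show n + 1 + 2 = n + 3 from rfl, h3, h4]
      field_simp
      ring

theorem sum_inv_factorial_mul :
    ∑' k : ℕ, (1 : ℝ) / (Nat.factorial (k + 1) * (k + 3)) = 1 / 2 := by
  have h : HasSum (fun k : ℕ => (1 : ℝ) / (Nat.factorial (k + 1) * (k + 3))) (1 / 2) := by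
    rw [hasSum_iff_tendsto_nat_of_nonneg (fun i => by positivity)]
    simp only [partial_sum_eq]
    have : Filter.Tendsto (fun n : ℕ => (1 : ℝ) / Nat.factorial (n + 2)) Filter.atTop (nhds 0) := by
      have hf : Filter.Tendsto (fun n : ℕ => (Nat.factorial (n + 2) : ℝ)) Filter.atTop Filter.atTop :=
        tendsto_natCast_atTop_atTop.comp
          (factorial_tendsto_atTop.comp (Filter.tendsto_add_atTop_nat 2))
      simpa [one_div, Pi.inv_def] using hf.inv_tendsto_atTop
    simpa using Filter.Tendsto.sub tendsto_const_nhds this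
  exact h.tsum_eq
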